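/- arXiv:1912.12185 — 3 statements merged into one kernel-verified Lean document; each statement's English description precedes it below -/
import Mathlib

section
/- Let H ∈ M_d(ℂ) be Hermitian, L_1,…,L_k ∈ M_d(ℂ) and γ_l ≥ 0, and let ℒ be the Lindbladian. Suppose S ∈ M_d(ℂ) is a unitary strong symmetry, i.e. [H,S] = 0 and [L_l,S] = 0 for all l, and suppose S has exactly n_s distinct eigenvalues. Then the dimension of the kernel of ℒ is at least n_s. -/
open Matrix

/-- The Lindbladian `ℒ(ρ) = -i[H,ρ] + Σ_l γ_l (2 L_l ρ L_l† - L_l†L_l ρ - ρ L_l†L_l)`. -/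
noncomputable def lindbladian {n : Type*} [Fintype n] {ι : Type*} [Fintype ι]
    (H : Matrix n n ℂ) (γ : ι → ℝ) (L : ι → Matrix n n ℂ) :
    Matrix n n ℂ →ₗ[ℂ] Matrix n n ℂ :=
  (-Complex.I) • (LinearMap.mulLeft ℂ H - LinearMap.mulRight ℂ H) +
    ∑ l : ι, (γ l : ℂ) •
      ((2 : ℂ) • (LinearMap.mulRight ℂ (L l)ᴴ ∘ₗ LinearMap.mulLeft ℂ (L l))
        - LinearMap.mulLeft ℂ ((L l)ᴴ * L l) - LinearMap.mulRight ℂ ((L l)ᴴ * L l))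

/-- The adjoint (Heisenberg-picture) Lindbladian
`ℒ†(O) = i[H,O] + Σ_l γ_l (2 L_l† O L_l - L_l†L_l O - O L_l†L_l)`. -/
noncomputable def adjLindbladian {n : Type*} [Fintype n] {ι : Type*} [Fintype ι]
    (H : Matrix n n ℂ) (γ : ι → ℝ) (L : ι → Matrix n n ℂ) :
    Matrix n n ℂ →ₗ[ℂ] Matrix n n ℂ :=
  Complex.I • (LinearMap.mulLeft ℂ H - LinearMap.mulRight ℂ H) +
    ∑ l : ι, (γ l : ℂ) •
      ((2 : ℂ) • (LinearMap.mulRight ℂ (L l) ∘ₗ LinearMap.mulLeft ℂ (L l)ᴴ)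
        - LinearMap.mulLeft ℂ ((L l)ᴴ * L l) - LinearMap.mulRight ℂ ((L l)ᴴ * L l))

private lemma lind_apply {n : Type*} [Fintype n] [DecidableEq n] {ι : Type*} [Fintype ι]
    (H : Matrix n n ℂ) (γ : ι → ℝ) (L : ι → Matrix n n ℂ) (X : Matrix n n ℂ) :
    lindbladian H γ L X = (-Complex.I) • (H * X - X * H) +
      ∑ l : ι, (γ l : ℂ) • ((2 : ℂ) • (L l * X * (L l)ᴴ)
        - ((L l)ᴴ * L l) * X - X * ((L l)ᴴ * L l)) := by
  simp [lindbladian, LinearMap.sum_apply, LinearMap.sub_apply, LinearMap.smul_apply,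
    LinearMap.comp_apply, LinearMap.mulLeft_apply, LinearMap.mulRight_apply, mul_assoc]

private lemma trace_lind {n : Type*} [Fintype n] [DecidableEq n] {ι : Type*} [Fintype ι]
    (H : Matrix n n ℂ) (γ : ι → ℝ) (L : ι → Matrix n n ℂ) (X : Matrix n n ℂ) :
    (lindbladian H γ L X).trace = 0 := by
  rw [lind_apply, trace_add, trace_smul, trace_sub, trace_mul_comm H X, sub_self, smul_zero,
    zero_add, trace_sum, Finset.sum_eq_zero]
  intro l _
  rw [trace_smul, trace_sub, trace_sub, trace_smul, trace_mul_cycle (L l) X (L l)ᴴ,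
    trace_mul_comm X ((L l)ᴴ * L l)]
  simp only [smul_eq_mul]
  ring

private lemma commute_mulLeft_of {n : Type*} [Fintype n] [DecidableEq n] {A B : Matrix n n ℂ}
    (h : B * A = A * B) : Commute (LinearMap.mulLeft ℂ A) (LinearMap.mulLeft ℂ B) := by
  rw [Commute, SemiconjBy, Module.End.mul_eq_comp, Module.End.mul_eq_comp,
    ← LinearMap.mulLeft_mul, ← LinearMap.mulLeft_mul, h]

private lemma commute_mulRight_of {n : Type*} [Fintype n] [DecidableEq n] {A B : Matrix n n ℂ}
    (h : B * A = A * B) : Commute (LinearMap.mulRight ℂ A) (LinearMap.mulRight ℂ B) := by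
  rw [Commute, SemiconjBy, Module.End.mul_eq_comp, Module.End.mul_eq_comp,
    ← LinearMap.mulRight_mul, ← LinearMap.mulRight_mul, h]

private lemma commute_lind_left {n : Type*} [Fintype n] [DecidableEq n] {ι : Type*} [Fintype ι]
    (H : Matrix n n ℂ) (γ : ι → ℝ) (L : ι → Matrix n n ℂ) (S : Matrix n n ℂ)
    (hSH : H * S = S * H) (hSL : ∀ l, L l * S = S * L l)
    (hSLd : ∀ l, (L l)ᴴ * S = S * (L l)ᴴ) :
    Commute (LinearMap.mulLeft ℂ S) (lindbladian H γ L) := by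
  unfold lindbladian
  apply Commute.add_right
  · exact ((commute_mulLeft_of hSH).sub_right (LinearMap.commute_mulLeft_right S H)).smul_right _
  · apply Commute.sum_right
    intro l _
    apply Commute.smul_right
    apply Commute.sub_right
    apply Commute.sub_right
    · apply Commute.smul_right
      rw [← Module.End.mul_eq_comp]
      exact (LinearMap.commute_mulLeft_right S (L l)ᴴ).mul_right (commute_mulLeft_of (hSL l))
    · exact commute_mulLeft_of (by rw [mul_assoc, hSL l, ← mul_assoc, hSLd l, mul_assoc])
    · exact LinearMap.commute_mulLeft_right S _

private lemma commute_lind_right {n : Type*} [Fintype n] [DecidableEq n] {ι : Type*} [Fintype ι]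
    (H : Matrix n n ℂ) (γ : ι → ℝ) (L : ι → Matrix n n ℂ) (S : Matrix n n ℂ)
    (hSH : H * S = S * H) (hSL : ∀ l, L l * S = S * L l)
    (hSLd : ∀ l, (L l)ᴴ * S = S * (L l)ᴴ) :
    Commute (LinearMap.mulRight ℂ S) (lindbladian H γ L) := by
  unfold lindbladian
  apply Commute.add_right
  · exact ((LinearMap.commute_mulLeft_right H S).symm.sub_right (commute_mulRight_of hSH)).smul_right _
  · apply Commute.sum_right
    intro l _
    apply Commute.smul_right
    apply Commute.sub_right
    apply Commute.sub_right
    · apply Commute.smul_right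
      rw [← Module.End.mul_eq_comp]
      exact (commute_mulRight_of (hSLd l)).mul_right (LinearMap.commute_mulLeft_right (L l) S).symm
    · exact (LinearMap.commute_mulLeft_right _ S).symm
    · exact commute_mulRight_of (by rw [mul_assoc, hSL l, ← mul_assoc, hSLd l, mul_assoc])

private lemma star_dot_self_ne_zero {d : ℕ} {v : Fin d → ℂ} (hv : v ≠ 0) :
    star v ⬝ᵥ v ≠ 0 := by
  have h : star v ⬝ᵥ v = ((∑ i, Complex.normSq (v i) : ℝ) : ℂ) := by
    push_cast
    simp only [dotProduct, Pi.star_apply, Complex.star_def, Complex.normSq_eq_conj_mul_self]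
  intro h0
  rw [h] at h0
  norm_cast at h0
  rw [Finset.sum_eq_zero_iff_of_nonneg (fun i _ => Complex.normSq_nonneg _)] at h0
  apply hv
  funext i
  exact Complex.normSq_eq_zero.mp (h0 i (Finset.mem_univ i))

private lemma unit_eigen {d : ℕ} (S : Matrix (Fin d) (Fin d) ℂ)
    (hS : Sᴴ * S = 1) {μ : ℂ} (hμ : μ ∈ spectrum ℂ S) :
    ∃ X : Matrix (Fin d) (Fin d) ℂ, X.trace ≠ 0 ∧ S * X = μ • X ∧ X * S = μ • X := by
  -- get an eigenvector
  have hμ' : μ ∈ spectrum ℂ (Matrix.toLinAlgEquiv' S) := by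
    rwa [AlgEquiv.spectrum_eq]
  obtain ⟨v, hv⟩ := (Module.End.hasEigenvalue_iff_mem_spectrum.mpr hμ').exists_hasEigenvector
  have hv0 : v ≠ 0 := hv.right
  have hv1 : S *ᵥ v = μ • v := by
    have := hv.apply_eq_smul
    rwa [Matrix.toLinAlgEquiv'_apply] at this
  have hstar : star v ⬝ᵥ v ≠ 0 := star_dot_self_ne_zero hv0
  have hnorm : star (S *ᵥ v) ⬝ᵥ (S *ᵥ v) = star v ⬝ᵥ v := by
    rw [star_mulVec, ← Matrix.dotProduct_mulVec, Matrix.mulVec_mulVec, hS, one_mulVec]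
  have hμ1 : star μ * μ = 1 := by
    rw [hv1, star_smul, smul_dotProduct, dotProduct_smul, smul_eq_mul, smul_eq_mul,
      ← mul_assoc] at hnorm
    have h3 : (star μ * μ) * (star v ⬝ᵥ v) = 1 * (star v ⬝ᵥ v) := by
      rw [one_mul]; exact hnorm
    exact mul_right_cancel₀ hstar h3
  have hSd : Sᴴ *ᵥ v = star μ • v := by
    have h4 : μ • (Sᴴ *ᵥ v) = v := by
      rw [← Matrix.mulVec_smul, ← hv1, Matrix.mulVec_mulVec, hS, one_mulVec]
    calc Sᴴ *ᵥ v = (star μ * μ) • (Sᴴ *ᵥ v) := by rw [hμ1, one_smul]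
      _ = star μ • (μ • (Sᴴ *ᵥ v)) := by rw [mul_smul]
      _ = star μ • v := by rw [h4]
  refine ⟨vecMulVec v (star v), ?_, ?_, ?_⟩
  · have ht : (vecMulVec v (star v)).trace = star v ⬝ᵥ v := by
      simp [Matrix.trace, Matrix.diag, vecMulVec_apply, dotProduct, mul_comm]
    rw [ht]; exact hstar
  · ext i j
    simp only [Matrix.mul_apply, vecMulVec_apply, Matrix.smul_apply, smul_eq_mul, Pi.star_apply]
    have hrow : (∑ k, S i k * v k) = μ * v i := by
      have := congrFun hv1 i
      simpa [Matrix.mulVec, dotProduct] using this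
    calc ∑ k, S i k * (v k * star (v j)) = (∑ k, S i k * v k) * star (v j) := by
          rw [Finset.sum_mul]; congr 1; ext k; ring
      _ = μ * (v i * star (v j)) := by rw [hrow]; ring
  · ext i j
    simp only [Matrix.mul_apply, vecMulVec_apply, Matrix.smul_apply, smul_eq_mul, Pi.star_apply]
    have h5 : ∑ k, star (S k j) * v k = star μ * v j := by
      have := congrFun hSd j
      simpa [Matrix.mulVec, dotProduct, conjTranspose_apply] using this
    have hcol : (∑ k, star (v k) * S k j) = μ * star (v j) := by
      calc ∑ k, star (v k) * S k j = star (∑ k, star (S k j) * v k) := by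
            rw [star_sum]; congr 1; ext k; simp [mul_comm]
        _ = star (star μ * v j) := by rw [h5]
        _ = μ * star (v j) := by simp [mul_comm]
    calc ∑ k, v i * star (v k) * S k j = v i * ∑ k, star (v k) * S k j := by
          rw [Finset.mul_sum]; congr 1; ext k; ring
      _ = μ * (v i * star (v j)) := by rw [hcol]; ring

/-- if `S` is a unitary strong symmetry with exactly `ns` distinct
eigenvalues, then the kernel of `ℒ` has dimension at least `ns`. -/
theorem ncard_spectrum_le_finrank_ker_lindbladian {d k : ℕ}
    (H : Matrix (Fin d) (Fin d) ℂ) (hH : H.IsHermitian)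
    (γ : Fin k → ℝ) (hγ : ∀ l, 0 ≤ γ l)
    (L : Fin k → Matrix (Fin d) (Fin d) ℂ)
    (S : Matrix (Fin d) (Fin d) ℂ)
    (hS : Sᴴ * S = 1) (hS' : S * Sᴴ = 1)
    (hSH : H * S = S * H)
    (hSL : ∀ l, L l * S = S * L l)
    (ns : ℕ) (hns : (spectrum ℂ S).ncard = ns) :
    ns ≤ Module.finrank ℂ (LinearMap.ker (lindbladian H γ L)) := by
  classical
  by_cases hfin : (spectrum ℂ S).Finite
  swap
  · rw [← hns, Set.Infinite.ncard hfin]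
    exact Nat.zero_le _
  have hSLd : ∀ l, (L l)ᴴ * S = S * (L l)ᴴ := by
    intro l
    have h1 : Sᴴ * (L l)ᴴ = (L l)ᴴ * Sᴴ := by
      rw [← conjTranspose_mul, ← conjTranspose_mul, hSL l]
    calc (L l)ᴴ * S = S * Sᴴ * (L l)ᴴ * S := by rw [hS', one_mul]
      _ = S * ((L l)ᴴ * Sᴴ) * S := by rw [mul_assoc S, h1]
      _ = S * (L l)ᴴ * (Sᴴ * S) := by rw [← mul_assoc S, mul_assoc (S * (L l)ᴴ)]
      _ = S * (L l)ᴴ := by rw [hS, mul_one]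
  have hCl := commute_lind_left H γ L S hSH hSL hSLd
  have hCr := commute_lind_right H γ L S hSH hSL hSLd
  -- for each eigenvalue, produce a nonzero kernel element in the symmetry sector
  have key : ∀ μ ∈ spectrum ℂ S, ∃ ρ : Matrix (Fin d) (Fin d) ℂ,
      ρ ≠ 0 ∧ lindbladian H γ L ρ = 0 ∧ S * ρ = μ • ρ := by
    intro μ hμ
    obtain ⟨Xμ, hXtr, hXl, hXr⟩ := unit_eigen S hS hμ
    set W : Submodule ℂ (Matrix (Fin d) (Fin d) ℂ) :=
      Module.End.eigenspace (LinearMap.mulLeft ℂ S) μ ⊓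
        Module.End.eigenspace (LinearMap.mulRight ℂ S) μ with hWdef
    have hWmem : ∀ X : Matrix (Fin d) (Fin d) ℂ, X ∈ W ↔ S * X = μ • X ∧ X * S = μ • X := by
      intro X
      rw [hWdef, Submodule.mem_inf, Module.End.mem_eigenspace_iff,
        Module.End.mem_eigenspace_iff, LinearMap.mulLeft_apply, LinearMap.mulRight_apply]
    have hWinv : ∀ X ∈ W, lindbladian H γ L X ∈ W := by
      intro X hXW
      obtain ⟨h1, h2⟩ := (hWmem X).mp hXW
      refine (hWmem _).mpr ⟨?_, ?_⟩
      · rw [← LinearMap.mulLeft_apply (R := ℂ) (a := S), ← Module.End.mul_apply, hCl.eq,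
          Module.End.mul_apply, LinearMap.mulLeft_apply, h1, _root_.map_smul]
      · rw [← LinearMap.mulRight_apply (R := ℂ) (a := S), ← Module.End.mul_apply, hCr.eq,
          Module.End.mul_apply, LinearMap.mulRight_apply, h2, _root_.map_smul]
    have hXW : Xμ ∈ W := (hWmem _).mpr ⟨hXl, hXr⟩
    set ℒ' := (lindbladian H γ L).restrict hWinv with hLdef
    have hninj : ¬ Function.Injective ℒ' := by
      intro hinj
      obtain ⟨w, hw⟩ := (LinearMap.injective_iff_surjective.mp hinj) ⟨Xμ, hXW⟩
      apply hXtr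
      have hcoe : (lindbladian H γ L) (w : Matrix (Fin d) (Fin d) ℂ) = Xμ := by
        have h6 := congrArg Subtype.val hw
        rwa [hLdef, LinearMap.restrict_coe_apply] at h6
      rw [← hcoe]
      exact trace_lind H γ L w
    rw [← LinearMap.ker_eq_bot] at hninj
    obtain ⟨w, hwk, hw0⟩ := Submodule.exists_mem_ne_zero_of_ne_bot hninj
    refine ⟨(w : Matrix (Fin d) (Fin d) ℂ), ?_, ?_, ?_⟩
    · simpa using hw0
    · have h7 := congrArg Subtype.val (LinearMap.mem_ker.mp hwk)
      rwa [hLdef, LinearMap.restrict_coe_apply, Submodule.coe_zero] at h7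
    · exact ((hWmem _).mp w.2).1
  -- assemble a linearly independent family in the kernel
  haveI := hfin.fintype
  choose ρ hρ0 hρker hρeig using key
  set v : (spectrum ℂ S) → Matrix (Fin d) (Fin d) ℂ := fun μ => ρ μ.1 μ.2 with hvdef
  have hli : LinearIndependent ℂ v := by
    apply Module.End.eigenvectors_linearIndependent (LinearMap.mulLeft ℂ S) (spectrum ℂ S) v
    intro μ
    refine ⟨Module.End.mem_eigenspace_iff.mpr ?_, hρ0 μ.1 μ.2⟩
    rw [LinearMap.mulLeft_apply]
    exact hρeig μ.1 μ.2
  set v' : (spectrum ℂ S) → ↥(LinearMap.ker (lindbladian H γ L)) :=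
    fun μ => ⟨v μ, LinearMap.mem_ker.mpr (hρker μ.1 μ.2)⟩ with hv'def
  have hli' : LinearIndependent ℂ v' := by
    apply LinearIndependent.of_comp (LinearMap.ker (lindbladian H γ L)).subtype
    exact hli
  have hcard := hli'.fintype_card_le_finrank
  rw [← hns]
  calc (spectrum ℂ S).ncard = Fintype.card (spectrum ℂ S) := by
        rw [Set.ncard_eq_toFinset_card', Set.toFinset_card]
    _ ≤ _ := hcard
end

section
/- Consider the fully-connected quantum network on ℂ^{N+1} with orthonormal basis |0⟩,|1⟩,…,|N⟩ and Hamiltonian H = ε_g|0⟩⟨0| + ε Σ_{i=1}^N |i⟩⟨i| + h Σ_{1 ≤ i ≠ j ≤ N} |i⟩⟨j| (ε_g, ε, h real). Let B ⊆ {1,…,N} be the set of bath sites, with jump operators L_a^+ = μ_a^+ |a⟩⟨0| and L_a^- = μ_a^- |0⟩⟨a| for a ∈ B. For any two sites i, j ∈ {1,…,N} \ B with i ≠ j, the exchange operator P_{ij} = I − |i⟩⟨i| − |j⟩⟨j| + |i⟩⟨j| + |j⟩⟨i| commutes with H and with every jump operator L_a^± (a ∈ B), i.e. P_{ij} is a strong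 symmetry of the network Liouvillian. -/
open Matrix

/-- The fully-connected network Hamiltonian
`H = ε_g|0⟩⟨0| + ε Σ_{i≥1} |i⟩⟨i| + h Σ_{1 ≤ i ≠ j ≤ N} |i⟩⟨j|` on `ℂ^{N+1}`. -/
noncomputable def networkH (N : ℕ) (εg ε h : ℝ) :
    Matrix (Fin (N + 1)) (Fin (N + 1)) ℂ :=
  (εg : ℂ) • Matrix.single 0 0 1
    + (ε : ℂ) • ∑ i ∈ Finset.univ.filter (fun i : Fin (N + 1) => i ≠ 0),
        Matrix.single i i 1
    + (h : ℂ) • ∑ i ∈ Finset.univ.filter (fun i : Fin (N + 1) => i ≠ 0),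
        ∑ j ∈ Finset.univ.filter (fun j : Fin (N + 1) => j ≠ 0 ∧ j ≠ i),
          Matrix.single i j 1

/-- The absorption jump operator `L_a^+ = μ_a^+ |a⟩⟨0|`. -/
noncomputable def networkLplus (N : ℕ) (μ : ℂ) (a : Fin (N + 1)) :
    Matrix (Fin (N + 1)) (Fin (N + 1)) ℂ :=
  μ • Matrix.single a 0 1

/-- The emission jump operator `L_a^- = μ_a^- |0⟩⟨a|`. -/
noncomputable def networkLminus (N : ℕ) (μ : ℂ) (a : Fin (N + 1)) :
    Matrix (Fin (N + 1)) (Fin (N + 1)) ℂ :=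
  μ • Matrix.single 0 a 1

/-- The exchange operator `P_{ij} = I - |i⟩⟨i| - |j⟩⟨j| + |i⟩⟨j| + |j⟩⟨i|`. -/
noncomputable def exchangeOp (N : ℕ) (i j : Fin (N + 1)) :
    Matrix (Fin (N + 1)) (Fin (N + 1)) ℂ :=
  1 - Matrix.single i i 1 - Matrix.single j j 1
    + Matrix.single i j 1 + Matrix.single j i 1

lemma exchangeOp_apply (N : ℕ) (i j : Fin (N + 1)) (hij : i ≠ j) (x y : Fin (N + 1)) :
    exchangeOp N i j x y = if Equiv.swap i j x = y then 1 else 0 := by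
  simp only [exchangeOp, Matrix.sub_apply, Matrix.add_apply, Matrix.one_apply,
    Matrix.single, Matrix.of_apply]
  rcases eq_or_ne x i with rfl | hxi
  · rw [Equiv.swap_apply_left]
    rcases eq_or_ne j y with rfl | hy <;> simp_all [eq_comm]
  · rcases eq_or_ne x j with rfl | hxj
    · rw [Equiv.swap_apply_right]
      rcases eq_or_ne i y with rfl | hy <;> simp_all [eq_comm]
    · rw [Equiv.swap_apply_of_ne_of_ne hxi hxj]
      simp [hxi.symm, hxj.symm, fun hh : i = x => hxi hh.symm]

lemma exchangeOp_mul_apply (N : ℕ) (i j : Fin (N + 1)) (hij : i ≠ j)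
    (M : Matrix (Fin (N + 1)) (Fin (N + 1)) ℂ) (x y : Fin (N + 1)) :
    (exchangeOp N i j * M) x y = M (Equiv.swap i j x) y := by
  rw [Matrix.mul_apply]
  simp [exchangeOp_apply N i j hij, ite_mul]

lemma mul_exchangeOp_apply (N : ℕ) (i j : Fin (N + 1)) (hij : i ≠ j)
    (M : Matrix (Fin (N + 1)) (Fin (N + 1)) ℂ) (x y : Fin (N + 1)) :
    (M * exchangeOp N i j) x y = M x (Equiv.swap i j y) := by
  rw [Matrix.mul_apply]
  have : ∀ k, M x k * exchangeOp N i j k y = if k = Equiv.swap i j y then M x k else 0 := by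
    intro k
    rw [exchangeOp_apply N i j hij]
    by_cases hk : Equiv.swap i j k = y
    · have : k = Equiv.swap i j y := by rw [← hk]; simp
      simp [hk, this]
    · have : k ≠ Equiv.swap i j y := by
        intro hh; apply hk; rw [hh]; simp
      simp [hk, this]
  simp [this]

lemma commute_of_swap (N : ℕ) (i j : Fin (N + 1)) (hij : i ≠ j)
    (M : Matrix (Fin (N + 1)) (Fin (N + 1)) ℂ)
    (hM : ∀ x y, M (Equiv.swap i j x) (Equiv.swap i j y) = M x y) :
    exchangeOp N i j * M = M * exchangeOp N i j := by
  ext x y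
  rw [exchangeOp_mul_apply N i j hij, mul_exchangeOp_apply N i j hij]
  have := hM x (Equiv.swap i j y)
  simpa using this

lemma networkH_apply (N : ℕ) (εg ε h : ℝ) (x y : Fin (N + 1)) :
    networkH N εg ε h x y =
      if x = 0 ∧ y = 0 then (εg : ℂ)
      else if x = y then (ε : ℂ)
      else if x ≠ 0 ∧ y ≠ 0 then (h : ℂ) else 0 := by
  have s1 : (∑ k ∈ Finset.univ.filter (fun k : Fin (N+1) => k ≠ 0),
      Matrix.single k k (1:ℂ)) x y = if x = y ∧ x ≠ 0 then 1 else 0 := by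
    rw [Matrix.sum_apply]
    by_cases hxy : x = y
    · subst hxy
      by_cases hx : x = 0
      · subst hx
        rw [Finset.sum_eq_zero]
        · simp
        · intro k hk
          simp only [Finset.mem_filter] at hk
          simp [Matrix.single, Matrix.of_apply, hk.2]
      · rw [Finset.sum_eq_single x]
        · simp [Matrix.single, Matrix.of_apply, hx]
        · intro k hk hkx
          simp [Matrix.single, Matrix.of_apply, hkx]
        · intro hx'; exact absurd (by simp [hx]) hx'
    · rw [Finset.sum_eq_zero]
      · simp [hxy]
      · intro k hk
        simp only [Matrix.single, Matrix.of_apply]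
        rw [if_neg]
        rintro ⟨rfl, rfl⟩; exact hxy rfl
  have s2 : (∑ k ∈ Finset.univ.filter (fun k : Fin (N+1) => k ≠ 0),
      ∑ l ∈ Finset.univ.filter (fun l : Fin (N+1) => l ≠ 0 ∧ l ≠ k),
      Matrix.single k l (1:ℂ)) x y
      = if x ≠ 0 ∧ y ≠ 0 ∧ x ≠ y then 1 else 0 := by
    simp only [Matrix.sum_apply]
    by_cases hcond : x ≠ 0 ∧ y ≠ 0 ∧ x ≠ y
    · obtain ⟨hx, hy, hxy⟩ := hcond
      rw [Finset.sum_eq_single x]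
      · rw [Finset.sum_eq_single y]
        · simp [Matrix.single, Matrix.of_apply, hx, hy, hxy]
        · intro l hl hly
          simp [Matrix.single, Matrix.of_apply, hly]
        · intro hy'
          exact absurd (by simp [hy, Ne.symm hxy]) hy'
      · intro k hk hkx
        rw [Finset.sum_eq_zero]
        intro l hl
        simp [Matrix.single, Matrix.of_apply, hkx]
      · intro hx'
        exact absurd (by simp [hx]) hx'
    · rw [Finset.sum_eq_zero]
      · simp [hcond]
      · intro k hk
        rw [Finset.sum_eq_zero]
        intro l hl
        simp only [Finset.mem_filter, Finset.mem_univ, true_and] at hk hl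
        simp only [Matrix.single, Matrix.of_apply]
        rw [if_neg]
        rintro ⟨rfl, rfl⟩
        exact hcond ⟨hk, hl.1, Ne.symm hl.2⟩
  simp only [networkH, Matrix.add_apply, Matrix.smul_apply, smul_eq_mul]
  rw [s1, s2]
  simp only [Matrix.single, Matrix.of_apply]
  by_cases hx : x = 0
  · subst hx
    by_cases hy : y = 0
    · subst hy; simp
    · simp [hy, Ne.symm hy]
  · have hx' : ¬(0 : Fin (N+1)) = x := fun hh => hx hh.symm
    by_cases hxy : x = y
    · subst hxy; simp [hx, hx']
    · by_cases hy : y = 0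
      · subst hy; simp [hx, hxy, hx']
      · have hy' : ¬(0 : Fin (N+1)) = y := fun hh => hy hh.symm
        simp [hx, hy, hxy, hx', hy']


/-- for sites `i ≠ j` not coupled to the baths, the exchange
operator `P_{ij}` commutes with `H` and with every jump operator `L_a^±`
(and their adjoints), i.e. it is a strong symmetry of the network Liouvillian. -/
theorem exchangeOp_strong_symmetry (N : ℕ) (εg ε h : ℝ)
    (B : Finset (Fin (N + 1))) (hB : (0 : Fin (N + 1)) ∉ B)
    (μp μm : Fin (N + 1) → ℂ)
    (i j : Fin (N + 1)) (hi0 : i ≠ 0) (hj0 : j ≠ 0) (hij : i ≠ j)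
    (hiB : i ∉ B) (hjB : j ∉ B) :
    exchangeOp N i j * networkH N εg ε h = networkH N εg ε h * exchangeOp N i j ∧
      ∀ a ∈ B,
        exchangeOp N i j * networkLplus N (μp a) a
            = networkLplus N (μp a) a * exchangeOp N i j ∧
        exchangeOp N i j * networkLminus N (μm a) a
            = networkLminus N (μm a) a * exchangeOp N i j ∧
        exchangeOp N i j * (networkLplus N (μp a) a)ᴴ
            = (networkLplus N (μp a) a)ᴴ * exchangeOp N i j ∧
        exchangeOp N i j * (networkLminus N (μm a) a)ᴴ
            = (networkLminus N (μm a) a)ᴴ * exchangeOp N i j := by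
  have swap0 : Equiv.swap i j 0 = 0 := Equiv.swap_apply_of_ne_of_ne (Ne.symm hi0) (Ne.symm hj0)
  have swap_eq_zero : ∀ x : Fin (N + 1), Equiv.swap i j x = 0 ↔ x = 0 := by
    intro x
    constructor
    · intro hx
      have := congrArg (Equiv.swap i j) hx
      simpa [swap0] using this
    · rintro rfl; exact swap0
  have swapB : ∀ a ∈ B, ∀ x, Equiv.swap i j x = a ↔ x = a := by
    intro a ha x
    have hai : a ≠ i := fun hh => hiB (hh ▸ ha)
    have haj : a ≠ j := fun hh => hjB (hh ▸ ha)
    constructor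
    · intro hx
      have := congrArg (Equiv.swap i j) hx
      simpa [Equiv.swap_apply_of_ne_of_ne hai haj] using this
    · rintro rfl; exact Equiv.swap_apply_of_ne_of_ne hai haj
  refine ⟨?_, ?_⟩
  · apply commute_of_swap N i j hij
    intro x y
    rw [networkH_apply, networkH_apply]
    have e1 : (Equiv.swap i j x = 0) = (x = 0) := propext (swap_eq_zero x)
    have e2 : (Equiv.swap i j y = 0) = (y = 0) := propext (swap_eq_zero y)
    have e3 : (Equiv.swap i j x = Equiv.swap i j y) = (x = y) :=
      propext (Equiv.apply_eq_iff_eq _)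
    simp only [ne_eq, e1, e2, e3]
  · intro a ha
    have key : ∀ (M : Matrix (Fin (N+1)) (Fin (N+1)) ℂ),
        (∀ x y, M (Equiv.swap i j x) (Equiv.swap i j y) = M x y) →
        exchangeOp N i j * M = M * exchangeOp N i j := commute_of_swap N i j hij
    have hLp : ∀ x y, networkLplus N (μp a) a (Equiv.swap i j x) (Equiv.swap i j y)
        = networkLplus N (μp a) a x y := by
      intro x y
      simp only [networkLplus, Matrix.smul_apply, Matrix.single, Matrix.of_apply]
      have e1 : (a = Equiv.swap i j x) = (a = x) :=
        propext ⟨fun hh => ((swapB a ha x).1 hh.symm).symm,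
          fun hh => ((swapB a ha x).2 hh.symm).symm⟩
      have e2 : ((0:Fin (N+1)) = Equiv.swap i j y) = ((0:Fin (N+1)) = y) :=
        propext ⟨fun hh => ((swap_eq_zero y).1 hh.symm).symm,
          fun hh => ((swap_eq_zero y).2 hh.symm).symm⟩
      simp only [e1, e2]
    have hLm : ∀ x y, networkLminus N (μm a) a (Equiv.swap i j x) (Equiv.swap i j y)
        = networkLminus N (μm a) a x y := by
      intro x y
      simp only [networkLminus, Matrix.smul_apply, Matrix.single, Matrix.of_apply]
      have e1 : ((0:Fin (N+1)) = Equiv.swap i j x) = ((0:Fin (N+1)) = x) :=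
        propext ⟨fun hh => ((swap_eq_zero x).1 hh.symm).symm,
          fun hh => ((swap_eq_zero x).2 hh.symm).symm⟩
      have e2 : (a = Equiv.swap i j y) = (a = y) :=
        propext ⟨fun hh => ((swapB a ha y).1 hh.symm).symm,
          fun hh => ((swapB a ha y).2 hh.symm).symm⟩
      simp only [e1, e2]
    refine ⟨key _ hLp, key _ hLm, key _ ?_, key _ ?_⟩
    · intro x y
      simp only [Matrix.conjTranspose_apply]
      rw [hLp y x]
    · intro x y
      simp only [Matrix.conjTranspose_apply]
      rw [hLm y x]
end

section
/- Consider the fully-connected quantum network on ℂ^{N+1} with Hamiltonian H = ε_g|0⟩⟨0| + ε Σ_{i=1}^N |i⟩⟨i| + h Σ_{1 ≤ i ≠ j ≤ N} |i⟩⟨j| and jump operators L_a^+ = μ_a^+ |a⟩⟨0|, L_a^- = μ_a^- |0⟩⟨a| for bath sites a ∈ B ⊆ {1,…,N}, with rates γ_a^± ≥ 0. Let n = N − |B| be the number of sites not coupled to the baths and assume n ≥ 1. Then the dimension of the kernel of the Lindbladian ℒ is at least (n−1)² + 1. -/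
open Matrix

/-! ### Auxiliary material -/

section Duality

open LinearMap Module

variable {n : Type*} [Fintype n] [DecidableEq n] {ι : Type*} [Fintype ι]

lemma aux_trace_mul_stdBasis (A : Matrix n n ℂ) (i j : n) :
    (A * Matrix.single j i 1).trace = A i j := by
  simp [Matrix.trace, Matrix.mul_apply, Matrix.single, Matrix.diag,
    ite_and, Finset.sum_ite_eq, Finset.sum_ite_eq']

noncomputable def auxTracePairing (n : Type*) [Fintype n] [DecidableEq n] :
    Matrix n n ℂ →ₗ[ℂ] Module.Dual ℂ (Matrix n n ℂ) where
  toFun A := (Matrix.traceLinearMap n ℂ ℂ).comp (LinearMap.mulLeft ℂ A)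
  map_add' A B := by ext X; simp [add_mul]
  map_smul' c A := by ext X; simp [smul_mul_assoc]

lemma auxTracePairing_apply (A X : Matrix n n ℂ) :
    auxTracePairing n A X = (A * X).trace := rfl

lemma auxTracePairing_injective : Function.Injective ⇑(auxTracePairing n) := by
  rw [← LinearMap.ker_eq_bot, eq_bot_iff]
  intro A hA
  have : ∀ X, (A * X).trace = 0 := by
    intro X
    have := LinearMap.congr_fun (LinearMap.mem_ker.1 hA : auxTracePairing n A = 0) X
    simpa [auxTracePairing_apply] using this
  have h2 : A = 0 := by
    ext i j
    have := this (Matrix.single j i 1)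
    rwa [aux_trace_mul_stdBasis] at this
  simp [h2]

lemma aux_ker_finrank_eq (T T' : Matrix n n ℂ →ₗ[ℂ] Matrix n n ℂ)
    (hd : ∀ A X, ((A * T X).trace) = ((T' A * X).trace)) :
    finrank ℂ (ker T') = finrank ℂ (ker T) := by
  have hinj := auxTracePairing_injective (n := n)
  have hsurj : Function.Surjective ⇑(auxTracePairing n) := by
    rw [← LinearMap.range_eq_top]
    apply Submodule.eq_top_of_finrank_eq
    rw [finrank_range_of_inj hinj, Subspace.dual_finrank_eq]
  have hcomp : (auxTracePairing n).comp T' = T.dualMap.comp (auxTracePairing n) := by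
    ext A X
    simp [auxTracePairing_apply, LinearMap.dualMap_apply, hd]
  have hker : ker T' = ker (T.dualMap.comp (auxTracePairing n)) := by
    rw [← hcomp, LinearMap.ker_comp, LinearMap.ker_eq_bot.2 hinj, Submodule.comap_bot]
  have hrange : range (T.dualMap.comp (auxTracePairing n)) = range T.dualMap := by
    rw [LinearMap.range_comp, LinearMap.range_eq_top.2 hsurj, Submodule.map_top]
  have h1 := LinearMap.finrank_range_add_finrank_ker (T.dualMap.comp (auxTracePairing n))
  have h2 := LinearMap.finrank_range_add_finrank_ker T
  rw [hrange, LinearMap.finrank_range_dualMap_eq_finrank_range] at h1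
  rw [hker]
  omega

lemma aux_lindblad_duality (H : Matrix n n ℂ) (γ : ι → ℝ) (L : ι → Matrix n n ℂ)
    (A X : Matrix n n ℂ) :
    (A * lindbladian H γ L X).trace = (adjLindbladian H γ L A * X).trace := by
  simp only [lindbladian, adjLindbladian, LinearMap.add_apply, LinearMap.smul_apply,
    LinearMap.sub_apply, LinearMap.sum_apply, LinearMap.comp_apply,
    LinearMap.mulLeft_apply, LinearMap.mulRight_apply]
  rw [mul_add, add_mul, trace_add, trace_add]
  congr 1
  · rw [mul_smul_comm, smul_mul_assoc, trace_smul, trace_smul, mul_sub, sub_mul,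
      trace_sub, trace_sub]
    have h1 : (A*(X*H)).trace = ((H*A)*X).trace := by
      simpa [Matrix.mul_assoc] using Matrix.trace_mul_cycle A X H
    have h2 : (A*(H*X)).trace = ((A*H)*X).trace := by
      simp [Matrix.mul_assoc]
    simp only [smul_eq_mul]
    linear_combination (-Complex.I) * h2 + Complex.I * h1
  · rw [Finset.mul_sum, Finset.sum_mul, trace_sum, trace_sum]
    refine Finset.sum_congr rfl fun l _ => ?_
    rw [mul_smul_comm, smul_mul_assoc, trace_smul, trace_smul]
    congr 1
    rw [mul_sub, mul_sub, sub_mul, sub_mul, trace_sub, trace_sub, trace_sub, trace_sub]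
    rw [mul_smul_comm, smul_mul_assoc, trace_smul, trace_smul]
    have h2 : (A*((L l)*X*(L l)ᴴ)).trace = ((L l)ᴴ*A*(L l)*X).trace := by
      simpa [Matrix.mul_assoc] using Matrix.trace_mul_cycle (A * L l) X (L l)ᴴ
    have h3 : (A*(X*((L l)ᴴ*(L l)))).trace = (((L l)ᴴ*(L l)*A)*X).trace := by
      have e1 := Matrix.trace_mul_cycle (A*X) (L l)ᴴ (L l)
      have e2 := Matrix.trace_mul_cycle (L l) (A*X) (L l)ᴴ
      simp only [Matrix.mul_assoc] at e1 e2 ⊢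
      rw [e1, e2]
    have h4 : (A*((L l)ᴴ*(L l)*X)).trace = ((A*((L l)ᴴ*(L l)))*X).trace := by
      simp [Matrix.mul_assoc]
    simp only [smul_eq_mul]
    linear_combination 2 * h2 - h4 - h3

lemma aux_adjL_one (H : Matrix n n ℂ) (γ : ι → ℝ) (L : ι → Matrix n n ℂ) :
    adjLindbladian H γ L 1 = 0 := by
  simp only [adjLindbladian, LinearMap.add_apply, LinearMap.smul_apply, LinearMap.sub_apply,
    LinearMap.sum_apply, LinearMap.comp_apply, LinearMap.mulLeft_apply,
    LinearMap.mulRight_apply, mul_one, one_mul, sub_self, smul_zero, zero_add]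
  refine Finset.sum_eq_zero fun l _ => ?_
  rw [two_smul]
  simp

end Duality

section Network

lemma hS (N : ℕ) (i a : Fin (N+1)) :
    (∑ x ∈ Finset.filter (fun i : Fin (N+1) => i ≠ 0) Finset.univ,
      ∑ x_1 ∈ Finset.filter (fun j : Fin (N+1) => j ≠ 0 ∧ j ≠ x) Finset.univ,
        if x = i then if x_1 = a then (1:ℂ) else 0 else 0)
      = if i ≠ 0 ∧ a ≠ 0 ∧ a ≠ i then 1 else 0 := by
  by_cases hi : i = 0
  · subst hi
    rw [Finset.sum_eq_zero, if_neg (by simp)]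
    intro x hx
    exact Finset.sum_eq_zero fun x1 _ =>
      if_neg (by simpa using (Finset.mem_filter.1 hx).2)
  · rw [Finset.sum_eq_single i]
    · simp only [if_pos rfl, Finset.sum_ite_eq', Finset.mem_filter, Finset.mem_univ,
        true_and, hi, not_false_iff, true_and]
      simp only [if_true, Finset.sum_ite_eq', Finset.mem_filter, Finset.mem_univ, true_and]
      by_cases h1 : a ≠ 0 ∧ a ≠ i
      · rw [if_pos h1, if_pos ⟨hi, h1⟩]
      · rw [if_neg h1, if_neg (by tauto)]
    · intro x _ hxi; exact Finset.sum_eq_zero fun _ _ => by rw [if_neg hxi]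
    · intro habs; exact absurd (Finset.mem_filter.2 ⟨Finset.mem_univ i, hi⟩) habs

lemma HE (N : ℕ) (εg ε h : ℝ) (a b : Fin (N+1)) (ha : a ≠ 0) :
    networkH N εg ε h * Matrix.single a b 1 =
      ((ε : ℂ) - h) • Matrix.single a b 1 +
        (h : ℂ) • ∑ i ∈ Finset.univ.filter (fun i : Fin (N + 1) => i ≠ 0),
          Matrix.single i b 1 := by
  ext i j
  simp only [networkH, Matrix.mul_apply, Matrix.add_apply, Matrix.smul_apply,
    Matrix.sum_apply, Matrix.single, Matrix.of_apply, smul_eq_mul,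
    Finset.mem_filter, Finset.mem_univ, true_and, ite_and, mul_ite, mul_one, mul_zero,
    Finset.sum_ite_eq, Finset.sum_ite_eq', if_true]
  by_cases hbj : b = j
  · simp only [if_pos hbj, hS]
    by_cases hia : i = a
    · subst hia
      simp only [if_pos rfl, if_neg (fun hh : (0:Fin (N+1)) = i => ha hh.symm), ha]
      have hi0 : i ≠ 0 := ha
      simp [hi0]
    · have : ¬ (a = i) := fun hh => hia hh.symm
      rw [if_neg this]
      by_cases hi0 : i = 0
      · simp only [hi0, if_pos rfl, ne_eq, not_true_eq_false, if_false, if_neg this]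
        simp [mul_ite]
        exact fun hh => absurd hh.symm ha
      · rw [if_neg (fun hh : (0:Fin (N+1)) = i => hi0 hh.symm), if_pos hi0, if_neg hia,
          if_pos (⟨hi0, ha, this⟩ : i ≠ 0 ∧ a ≠ 0 ∧ a ≠ i), if_pos hi0]
        ring
  · simp [hbj]

lemma EH (N : ℕ) (εg ε h : ℝ) (a b : Fin (N+1)) (hb : b ≠ 0) :
    Matrix.single a b 1 * networkH N εg ε h =
      ((ε : ℂ) - h) • Matrix.single a b 1 +
        (h : ℂ) • ∑ j ∈ Finset.univ.filter (fun j : Fin (N + 1) => j ≠ 0),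
          Matrix.single a j 1 := by
  ext i j
  simp only [networkH, Matrix.mul_apply, Matrix.add_apply, Matrix.smul_apply,
    Matrix.sum_apply, Matrix.single, Matrix.of_apply, smul_eq_mul,
    Finset.mem_filter, Finset.mem_univ, true_and, ite_and, mul_ite, ite_mul, mul_one, mul_zero,
    one_mul, zero_mul, if_true]
  by_cases hai : a = i
  · simp only [hai, eq_self_iff_true, if_true, Finset.sum_ite_eq, Finset.mem_univ, hS,
      Finset.sum_ite_eq', Finset.mem_filter, Finset.mem_univ, true_and,
      if_neg (fun hh : (0:Fin (N+1)) = b => hb hh.symm), if_pos hb]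
    by_cases hbj : b = j
    · subst hbj
      rw [if_pos rfl, if_pos rfl, if_neg (by tauto), if_pos hb]
      ring
    · rw [if_neg hbj, if_neg hbj]
      by_cases hj0 : j = 0
      · rw [if_neg (by tauto), if_neg (by tauto)]
        ring
      · rw [if_pos ⟨hb, hj0, fun hh => hbj hh.symm⟩, if_pos hj0]
        ring
  · simp [hai]

/-- the dark-state matrix `(|s⟩-|s0⟩)(⟨t|-⟨s0|)` -/
noncomputable def darkM (N : ℕ) (s0 s t : Fin (N+1)) :
    Matrix (Fin (N+1)) (Fin (N+1)) ℂ :=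
  Matrix.single s t 1 - Matrix.single s s0 1 - Matrix.single s0 t 1
    + Matrix.single s0 s0 1

lemma aux_stdBasis_conjT (N : ℕ) (i j : Fin (N+1)) :
    (Matrix.single i j (1:ℂ))ᴴ = Matrix.single j i 1 := by
  ext a b
  simp only [conjTranspose_apply, Matrix.single, Matrix.of_apply]
  split_ifs with h1 h2 h2 <;> simp_all [and_comm] <;> tauto

lemma aux_HM (N : ℕ) (εg ε h : ℝ) (s0 s t : Fin (N+1))
    (hs0 : s0 ≠ 0) (hs : s ≠ 0) (ht : t ≠ 0) :
    networkH N εg ε h * darkM N s0 s t = ((ε:ℂ) - h) • darkM N s0 s t := by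
  unfold darkM
  rw [mul_add, mul_sub, mul_sub, HE N εg ε h s t hs, HE N εg ε h s s0 hs,
    HE N εg ε h s0 t hs0, HE N εg ε h s0 s0 hs0]
  module

lemma aux_MH (N : ℕ) (εg ε h : ℝ) (s0 s t : Fin (N+1))
    (hs0 : s0 ≠ 0) (hs : s ≠ 0) (ht : t ≠ 0) :
    darkM N s0 s t * networkH N εg ε h = ((ε:ℂ) - h) • darkM N s0 s t := by
  unfold darkM
  rw [add_mul, sub_mul, sub_mul, EH N εg ε h s t ht, EH N εg ε h s s0 hs0,
    EH N εg ε h s0 t ht, EH N εg ε h s0 s0 hs0]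
  module

lemma aux_E_mul_darkM (N : ℕ) (s0 s t x y : Fin (N+1))
    (hys : y ≠ s) (hys0 : y ≠ s0) :
    Matrix.single x y 1 * darkM N s0 s t = 0 := by
  unfold darkM
  rw [mul_add, mul_sub, mul_sub,
    Matrix.single_mul_single_of_ne (c := (1:ℂ)) _ _ _ hys (1:ℂ), Matrix.single_mul_single_of_ne (c := (1:ℂ)) _ _ _ hys (1:ℂ),
    Matrix.single_mul_single_of_ne (c := (1:ℂ)) _ _ _ hys0 (1:ℂ), Matrix.single_mul_single_of_ne (c := (1:ℂ)) _ _ _ hys0 (1:ℂ)]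
  simp

lemma aux_darkM_mul_E (N : ℕ) (s0 s t x y : Fin (N+1))
    (htx : t ≠ x) (hs0x : s0 ≠ x) :
    darkM N s0 s t * Matrix.single x y 1 = 0 := by
  unfold darkM
  rw [add_mul, sub_mul, sub_mul,
    Matrix.single_mul_single_of_ne (c := (1:ℂ)) _ _ _ htx (1:ℂ), Matrix.single_mul_single_of_ne (c := (1:ℂ)) _ _ _ htx (1:ℂ),
    Matrix.single_mul_single_of_ne (c := (1:ℂ)) _ _ _ hs0x (1:ℂ), Matrix.single_mul_single_of_ne (c := (1:ℂ)) _ _ _ hs0x (1:ℂ)]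
  simp

lemma aux_darkM_apply (N : ℕ) (s0 s t x y : Fin (N+1))
    (hx : x ≠ s0) (hy : y ≠ s0) :
    darkM N s0 s t x y = if s = x ∧ t = y then 1 else 0 := by
  unfold darkM
  simp only [Matrix.add_apply, Matrix.sub_apply, Matrix.single, Matrix.of_apply]
  split_ifs <;> simp_all <;> tauto

lemma aux_darkM_apply00 (N : ℕ) (s0 s t : Fin (N+1))
    (hs0 : s0 ≠ 0) (hs : s ≠ 0) :
    darkM N s0 s t 0 0 = 0 := by
  unfold darkM
  simp only [Matrix.add_apply, Matrix.sub_apply, Matrix.single, Matrix.of_apply]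
  split_ifs <;> simp_all

lemma aux_adjL_darkM (N : ℕ) (εg ε h : ℝ) (B : Finset (Fin (N + 1)))
    (μp μm : Fin (N + 1) → ℂ) (γp γm : Fin (N + 1) → ℝ)
    (s0 s t : Fin (N+1))
    (hs0 : s0 ≠ 0) (hs : s ≠ 0) (ht : t ≠ 0)
    (hs0B : s0 ∉ B) (hsB : s ∉ B) (htB : t ∉ B) :
    adjLindbladian (networkH N εg ε h)
      (fun p : ↥B × Bool => if p.2 then γp p.1 else γm p.1)
      (fun p : ↥B × Bool =>
        if p.2 then networkLplus N (μp p.1) p.1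
        else networkLminus N (μm p.1) p.1)
      (darkM N s0 s t) = 0 := by
  simp only [adjLindbladian, LinearMap.add_apply, LinearMap.smul_apply, LinearMap.sub_apply,
    LinearMap.sum_apply, LinearMap.comp_apply, LinearMap.mulLeft_apply,
    LinearMap.mulRight_apply]
  rw [aux_HM N εg ε h s0 s t hs0 hs ht, aux_MH N εg ε h s0 s t hs0 hs ht, sub_self,
    smul_zero, zero_add]
  refine Finset.sum_eq_zero fun p _ => ?_
  obtain ⟨⟨a, haB⟩, b⟩ := p
  have has : a ≠ s := fun hh => hsB (hh ▸ haB)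
  have hat : a ≠ t := fun hh => htB (hh ▸ haB)
  have has0 : a ≠ s0 := fun hh => hs0B (hh ▸ haB)
  cases b
  · -- b = false : L = networkLminus = μ • E_{0a},  Lᴴ = star μ • E_{a0}
    simp only [if_neg Bool.false_ne_true, networkLminus, if_false]
    have e1 : (μm a • Matrix.single (0 : Fin (N+1)) a 1)ᴴ * darkM N s0 s t = 0 := by
      rw [conjTranspose_smul, aux_stdBasis_conjT, smul_mul_assoc,
        aux_E_mul_darkM N s0 s t a 0 (Ne.symm hs) (Ne.symm hs0), smul_zero]
    have e2 : (μm a • Matrix.single (0 : Fin (N+1)) a 1) * darkM N s0 s t = 0 := by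
      rw [smul_mul_assoc, aux_E_mul_darkM N s0 s t 0 a (Ne.symm ?_) (Ne.symm ?_), smul_zero]
      · exact fun hh => has hh.symm
      · exact fun hh => has0 hh.symm
    have e3 : darkM N s0 s t * (μm a • Matrix.single (0 : Fin (N+1)) a 1)ᴴ = 0 := by
      rw [conjTranspose_smul, aux_stdBasis_conjT, mul_smul_comm,
        aux_darkM_mul_E N s0 s t a 0 (Ne.symm hat) (Ne.symm has0), smul_zero]
    rw [e1, zero_mul, smul_zero, Matrix.mul_assoc, e2, mul_zero, ← Matrix.mul_assoc, e3,
      zero_mul]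
    simp
  · -- b = true : L = networkLplus = μ • E_{a0}, Lᴴ = star μ • E_{0a}
    simp only [networkLplus, if_true]
    have e1 : (μp a • Matrix.single a (0 : Fin (N+1)) 1)ᴴ * darkM N s0 s t = 0 := by
      rw [conjTranspose_smul, aux_stdBasis_conjT, smul_mul_assoc,
        aux_E_mul_darkM N s0 s t 0 a has has0, smul_zero]
    have e2 : (μp a • Matrix.single a (0 : Fin (N+1)) 1) * darkM N s0 s t = 0 := by
      rw [smul_mul_assoc, aux_E_mul_darkM N s0 s t a 0 (Ne.symm hs) (Ne.symm hs0), smul_zero]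
    have e3 : darkM N s0 s t * (μp a • Matrix.single a (0 : Fin (N+1)) 1)ᴴ = 0 := by
      rw [conjTranspose_smul, aux_stdBasis_conjT, mul_smul_comm,
        aux_darkM_mul_E N s0 s t 0 a ht hs0, smul_zero]
    rw [e1, zero_mul, smul_zero, Matrix.mul_assoc, e2, mul_zero, ← Matrix.mul_assoc, e3,
      zero_mul]
    simp

end Network

/-- for the fully-connected network with bath sites `B`
(`0 ∉ B`), with `n = N - |B| ≥ 1` sites uncoupled from the baths, the kernel
of the Lindbladian has dimension at least `(n-1)² + 1`. -/
theorem network_ker_lindbladian_lower_bound (N : ℕ) (εg ε h : ℝ)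
    (B : Finset (Fin (N + 1))) (hB : (0 : Fin (N + 1)) ∉ B)
    (μp μm : Fin (N + 1) → ℂ) (γp γm : Fin (N + 1) → ℝ)
    (hγp : ∀ a, 0 ≤ γp a) (hγm : ∀ a, 0 ≤ γm a)
    (hn : 1 ≤ N - B.card) :
    (N - B.card - 1) ^ 2 + 1 ≤
      Module.finrank ℂ (LinearMap.ker (lindbladian (networkH N εg ε h)
        (fun p : ↥B × Bool => if p.2 then γp p.1 else γm p.1)
        (fun p : ↥B × Bool =>
          if p.2 then networkLplus N (μp p.1) p.1
          else networkLminus N (μm p.1) p.1))) := by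
  classical
  set γf := (fun p : ↥B × Bool => if p.2 then γp p.1 else γm p.1) with hγf
  set Lf := (fun p : ↥B × Bool =>
      if p.2 then networkLplus N (μp p.1) p.1
      else networkLminus N (μm p.1) p.1) with hLf
  rw [← aux_ker_finrank_eq (lindbladian (networkH N εg ε h) γf Lf)
      (adjLindbladian (networkH N εg ε h) γf Lf)
      (aux_lindblad_duality (networkH N εg ε h) γf Lf)]
  -- the free sites
  set S : Finset (Fin (N + 1)) := (insert 0 B)ᶜ with hSdef
  have hBN : B.card < N := by
    by_contra hc
    push_neg at hc
    omega
  have hScard : S.card = N - B.card := by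
    rw [hSdef, Finset.card_compl, Finset.card_insert_of_notMem hB]
    simp only [Fintype.card_fin]
    omega
  obtain ⟨s0, hs0S⟩ : S.Nonempty := Finset.card_pos.mp (by omega)
  set T : Finset (Fin (N + 1)) := S.erase s0 with hTdef
  have hTcard : T.card = N - B.card - 1 := by
    rw [hTdef, Finset.card_erase_of_mem hs0S, hScard]
  have hmemS : ∀ x ∈ S, x ≠ 0 ∧ x ∉ B := by
    intro x hx
    rw [hSdef, Finset.mem_compl, Finset.mem_insert, not_or] at hx
    exact hx
  have hs00 : s0 ≠ 0 := (hmemS s0 hs0S).1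
  have hs0B : s0 ∉ B := (hmemS s0 hs0S).2
  have hmemT : ∀ x ∈ T, x ≠ 0 ∧ x ∉ B ∧ x ≠ s0 := by
    intro x hx
    rw [hTdef, Finset.mem_erase] at hx
    exact ⟨(hmemS x hx.2).1, (hmemS x hx.2).2, hx.1⟩
  -- the linearly independent family in the kernel of the adjoint Lindbladian
  set f : (↥T × ↥T) ⊕ Unit → Matrix (Fin (N + 1)) (Fin (N + 1)) ℂ :=
    Sum.elim (fun p => darkM N s0 p.1.1 p.2.1) (fun _ => 1) with hfdef
  have hker : ∀ idx, f idx ∈ LinearMap.ker (adjLindbladian (networkH N εg ε h) γf Lf) := by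
    intro idx
    rw [LinearMap.mem_ker]
    rcases idx with ⟨⟨s, hsT⟩, ⟨t, htT⟩⟩ | _
    · obtain ⟨hs1, hs2, _⟩ := hmemT s hsT
      obtain ⟨ht1, ht2, _⟩ := hmemT t htT
      exact aux_adjL_darkM N εg ε h B μp μm γp γm s0 s t hs00 hs1 ht1 hs0B hs2 ht2
    · exact aux_adjL_one (networkH N εg ε h) γf Lf
  -- the coefficient-extraction map
  set Ψ : Matrix (Fin (N + 1)) (Fin (N + 1)) ℂ →ₗ[ℂ] ((↥T × ↥T) ⊕ Unit → ℂ) :=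
    { toFun := fun X => Sum.elim
        (fun p : ↥T × ↥T => X p.1.1 p.2.1 - if (p.1.1 : Fin (N+1)) = p.2.1 then X 0 0 else 0)
        (fun _ => X 0 0),
      map_add' := by
        intro X Y
        funext idx
        rcases idx with p | u <;> simp [Matrix.add_apply] <;> split_ifs <;> ring
      map_smul' := by
        intro c X
        funext idx
        rcases idx with p | u <;> simp [Matrix.smul_apply] <;> split_ifs <;> ring } with hΨdef
  have hkey : ⇑Ψ ∘ f = fun idx => Pi.single idx (1 : ℂ) := by
    funext idx
    rcases idx with ⟨⟨s, hsT⟩, ⟨t, htT⟩⟩ | u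
    · obtain ⟨hs1, -, hs3⟩ := hmemT s hsT
      obtain ⟨ht1, -, ht3⟩ := hmemT t htT
      funext idx'
      rcases idx' with ⟨⟨s', hs'T⟩, ⟨t', ht'T⟩⟩ | u'
      · obtain ⟨-, -, hs'3⟩ := hmemT s' hs'T
        obtain ⟨-, -, ht'3⟩ := hmemT t' ht'T
        simp only [hΨdef, hfdef, Function.comp_apply, Sum.elim_inl, LinearMap.coe_mk,
          AddHom.coe_mk]
        rw [aux_darkM_apply N s0 s t s' t' hs'3 ht'3,
          aux_darkM_apply00 N s0 s t hs00 hs1, ite_self, sub_zero, Pi.single_apply]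
        by_cases hpq : s = s' ∧ t = t'
        · rw [if_pos hpq, if_pos (by
            simp only [Sum.inl.injEq, Prod.mk.injEq, Subtype.mk.injEq]
            exact ⟨hpq.1.symm, hpq.2.symm⟩)]
        · rw [if_neg hpq, if_neg (by
            intro hc
            simp only [Sum.inl.injEq, Prod.mk.injEq, Subtype.mk.injEq] at hc
            exact hpq ⟨hc.1.symm, hc.2.symm⟩)]
      · simp only [hΨdef, hfdef, Function.comp_apply, Sum.elim_inl, Sum.elim_inr,
          LinearMap.coe_mk, AddHom.coe_mk]
        rw [aux_darkM_apply00 N s0 s t hs00 hs1, Pi.single_apply,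
          if_neg (by simp)]
    · funext idx'
      rcases idx' with ⟨⟨s', hs'T⟩, ⟨t', ht'T⟩⟩ | u'
      · simp only [hΨdef, hfdef, Function.comp_apply, Sum.elim_inl, Sum.elim_inr,
          LinearMap.coe_mk, AddHom.coe_mk]
        rw [Matrix.one_apply, Matrix.one_apply_eq, sub_self, Pi.single_apply,
          if_neg (by simp)]
      · simp only [hΨdef, hfdef, Function.comp_apply, Sum.elim_inr, LinearMap.coe_mk,
          AddHom.coe_mk, Matrix.one_apply_eq, Pi.single_apply,
          eq_iff_true_of_subsingleton, if_true]
  have hLIsingle : LinearIndependent ℂ (fun idx : (↥T × ↥T) ⊕ Unit => Pi.single idx (1 : ℂ)) := by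
    have h0 := (Pi.basisFun ℂ ((↥T × ↥T) ⊕ Unit)).linearIndependent
    rwa [show ⇑(Pi.basisFun ℂ ((↥T × ↥T) ⊕ Unit)) = fun idx => Pi.single idx (1 : ℂ) from
      funext fun i => Pi.basisFun_apply ℂ _ i] at h0
  have hLI : LinearIndependent ℂ f :=
    LinearIndependent.of_comp Ψ (by rw [hkey]; exact hLIsingle)
  -- conclude
  set K := LinearMap.ker (adjLindbladian (networkH N εg ε h) γf Lf)
  set g : (↥T × ↥T) ⊕ Unit → ↥K := fun idx => ⟨f idx, hker idx⟩ with hgdef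
  have hLIg : LinearIndependent ℂ g := by
    apply LinearIndependent.of_comp K.subtype
    exact hLI
  have hcard := hLIg.fintype_card_le_finrank
  calc (N - B.card - 1) ^ 2 + 1
      = Fintype.card ((↥T × ↥T) ⊕ Unit) := by
        simp [Fintype.card_sum, Fintype.card_prod, Fintype.card_coe, hTcard, sq]
    _ ≤ Module.finrank ℂ K := hcard
end
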